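/- In the Brandt semigroup B_n, for nonzero b = (b¹,b²), c = (c¹,c²), d = (d¹,d²): the equation b·x = c·x·d has exactly n² − n + 2 solutions if c² = b² and (c¹,d²) = (b¹,d¹); exactly n² + 1 − n solutions if c² = b² but (c¹,d²) ≠ (b¹,d¹); and exactly n² − n solutions if c² ≠ b². -/

import Mathlib

/-- The Brandt semigroup `B_n`: `none` is the zero element `0`, and
`some (i, j)` is the element `(i, j)` with `i, j ∈ {1, …, n}` (as `Fin n`). -/
abbrev Brandt (n : ℕ) : Type := Option (Fin n × Fin n)

/-- Multiplication on the Brandt semigroup. -/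
def bmul {n : ℕ} : Brandt n → Brandt n → Brandt n
  | some (e, k), some (l, m) => if k = l then some (e, m) else none
  | _, _ => none

/-- Counting solutions over `Option α` when `none` is a solution. -/
theorem card_opt_subtype {α : Type*} [Fintype α] (P : Option α → Prop) [DecidablePred P]
    (h0 : P none) :
    Nat.card {x : Option α // P x} =
      (Finset.univ.filter fun a => P (some a)).card + 1 := by
  have e : {x : Option α // P x} ≃ Option {a : α // P (some a)} :=
    { toFun := fun x => match x with
        | ⟨none, _⟩ => none
        | ⟨some a, h⟩ => some ⟨a, h⟩
      invFun := fun o => match o with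
        | none => ⟨none, h0⟩
        | some ⟨a, ha⟩ => ⟨some a, ha⟩
      left_inv := by rintro ⟨_ | a, h⟩ <;> rfl
      right_inv := by rintro (_ | ⟨a, ha⟩) <;> rfl }
  rw [Nat.card_congr e, Nat.card_eq_fintype_card, Fintype.card_option, Fintype.card_subtype]

/-- Non-`none` solutions, case `c² = b²`, `c¹ = b¹`, `d² = d¹`. -/
theorem brandt_sol1 (n : ℕ) (b1 b2 c1 c2 d1 d2 : Fin n)
    (h1 : c2 = b2) (h2a : c1 = b1) (h2b : d2 = d1) :
    (Finset.univ.filter fun a : Fin n × Fin n =>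
        ¬ (bmul (some (b1, b2)) (some a) =
          bmul (some (c1, c2)) (bmul (some a) (some (d1, d2))))) =
      {b2} ×ˢ Finset.univ.erase d1 := by
  subst h1 h2a h2b
  ext ⟨i, j⟩
  rw [Finset.mem_filter]
  simp only [Finset.mem_filter, Finset.mem_univ, true_and, Finset.mem_product,
    Finset.mem_singleton, Finset.mem_erase, bmul]
  split_ifs <;> simp_all [eq_comm]

/-- Non-`none` solutions, case `c² = b²` and `(c¹,d²) ≠ (b¹,d¹)`. -/
theorem brandt_sol2 (n : ℕ) (b1 b2 c1 c2 d1 d2 : Fin n)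
    (h1 : c2 = b2) (h2 : ¬(c1 = b1 ∧ d2 = d1)) :
    (Finset.univ.filter fun a : Fin n × Fin n =>
        ¬ (bmul (some (b1, b2)) (some a) =
          bmul (some (c1, c2)) (bmul (some a) (some (d1, d2))))) =
      {b2} ×ˢ Finset.univ := by
  subst h1
  ext ⟨i, j⟩
  rw [Finset.mem_filter]
  simp only [Finset.mem_filter, Finset.mem_univ, true_and, Finset.mem_product,
    Finset.mem_singleton, and_true, bmul]
  split_ifs <;> simp_all [eq_comm]

/-- Non-`none` solutions, case `c² ≠ b²`. -/
theorem brandt_sol3 (n : ℕ) (b1 b2 c1 c2 d1 d2 : Fin n) (h1 : c2 ≠ b2) :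
    (Finset.univ.filter fun a : Fin n × Fin n =>
        ¬ (bmul (some (b1, b2)) (some a) =
          bmul (some (c1, c2)) (bmul (some a) (some (d1, d2))))) =
      ({b2} ×ˢ Finset.univ) ∪ ({c2} ×ˢ {d1}) := by
  ext ⟨i, j⟩
  rw [Finset.mem_filter]
  simp only [Finset.mem_filter, Finset.mem_univ, true_and, Finset.mem_union,
    Finset.mem_product, Finset.mem_singleton, and_true, bmul]
  split_ifs <;> simp_all [eq_comm] <;> aesop

/-- Solutions of `b·x = c·x·d` in `B_n` for nonzero `b, c, d`: exactly
`n² − n + 2` solutions if `c² = b²` and `(c¹,d²) = (b¹,d¹)`; exactly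
`n² + 1 − n` if `c² = b²` but `(c¹,d²) ≠ (b¹,d¹)`; and exactly `n² − n`
if `c² ≠ b²`. -/
theorem brandt_eq_lmul_sandwich (n : ℕ) (b c d : Fin n × Fin n) :
    (c.2 = b.2 ∧ (c.1, d.2) = (b.1, d.1) →
      Nat.card {x : Brandt n //
          bmul (some b) x = bmul (some c) (bmul x (some d))} =
        n ^ 2 + 2 - n) ∧
    (c.2 = b.2 ∧ (c.1, d.2) ≠ (b.1, d.1) →
      Nat.card {x : Brandt n //
          bmul (some b) x = bmul (some c) (bmul x (some d))} =
        n ^ 2 + 1 - n) ∧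
    (c.2 ≠ b.2 →
      Nat.card {x : Brandt n //
          bmul (some b) x = bmul (some c) (bmul x (some d))} =
        n ^ 2 - n) := by
  obtain ⟨b1, b2⟩ := b
  obtain ⟨c1, c2⟩ := c
  obtain ⟨d1, d2⟩ := d
  have hn : 0 < n := b1.pos
  have hge : n ≤ n ^ 2 := by nlinarith
  have hpow : n ^ 2 = n * n := by ring
  have h0 : bmul (some (b1, b2)) (none : Brandt n) =
      bmul (some (c1, c2)) (bmul none (some (d1, d2))) := rfl
  have hcard : Nat.card {x : Brandt n //
        bmul (some (b1, b2)) x = bmul (some (c1, c2)) (bmul x (some (d1, d2)))} =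
      (Finset.univ.filter fun a : Fin n × Fin n =>
        bmul (some (b1, b2)) (some a) =
          bmul (some (c1, c2)) (bmul (some a) (some (d1, d2)))).card + 1 :=
    card_opt_subtype
      (fun x => bmul (some (b1, b2)) x = bmul (some (c1, c2)) (bmul x (some (d1, d2)))) h0
  have hsplit := Finset.card_filter_add_card_filter_not
    (s := (Finset.univ : Finset (Fin n × Fin n)))
    (p := fun a => bmul (some (b1, b2)) (some a) =
      bmul (some (c1, c2)) (bmul (some a) (some (d1, d2))))
  simp only [Finset.card_univ, Fintype.card_prod, Fintype.card_fin, ← hpow] at hsplit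
  refine ⟨fun h => ?_, fun h => ?_, fun h => ?_⟩
  · obtain ⟨h1', h2'⟩ := h
    have h1 : c2 = b2 := h1'
    have h2 : (c1, d2) = (b1, d1) := h2'
    rw [Prod.mk.injEq] at h2
    rw [brandt_sol1 n b1 b2 c1 c2 d1 d2 h1 h2.1 h2.2] at hsplit
    rw [Finset.card_product, Finset.card_singleton, Finset.card_erase_of_mem
      (Finset.mem_univ d1), Finset.card_univ, Fintype.card_fin, one_mul] at hsplit
    rw [hcard]
    omega
  · obtain ⟨h1', h2'⟩ := h
    have h1 : c2 = b2 := h1'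
    have h2 : (c1, d2) ≠ (b1, d1) := h2'
    have h2'' : ¬(c1 = b1 ∧ d2 = d1) := fun ⟨ha, hb⟩ => h2 (by rw [ha, hb])
    rw [brandt_sol2 n b1 b2 c1 c2 d1 d2 h1 h2''] at hsplit
    rw [Finset.card_product, Finset.card_singleton, Finset.card_univ,
      Fintype.card_fin, one_mul] at hsplit
    rw [hcard]
    omega
  · have h1 : c2 ≠ b2 := h
    have h2n : 2 ≤ n := by
      have hne : (c2 : ℕ) ≠ (b2 : ℕ) := fun h' => h1 (Fin.ext h')
      have := c2.isLt
      have := b2.isLt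
      omega
    have hdisj : Disjoint ({b2} ×ˢ (Finset.univ : Finset (Fin n)))
        (({c2} : Finset (Fin n)) ×ˢ ({d1} : Finset (Fin n))) := by
      rw [Finset.disjoint_left]
      rintro ⟨i, j⟩ hi hj
      simp only [Finset.mem_product, Finset.mem_singleton] at hi hj
      exact h1 (hj.1 ▸ hi.1)
    rw [brandt_sol3 n b1 b2 c1 c2 d1 d2 h1, Finset.card_union_of_disjoint hdisj] at hsplit
    simp only [Finset.card_product, Finset.card_singleton, Finset.card_univ,
      Fintype.card_fin, one_mul, mul_one] at hsplit
    have hge2 : n + 1 ≤ n ^ 2 := by nlinarith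
    rw [hcard]
    omega
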